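/- Let Θ be a nonempty set, p ≥ 1, and for each θ ∈ Θ, j ∈ [p] let μ_{θj}, v_{θj} ∈ ℝ and r_{θj} > 0. Suppose Θ_I := {θ ∈ Θ : μ_{θj} ≤ 0 for all j ∈ [p]} is nonempty, sup_{θ,j} |v_{θj}| ≤ w̄ < ∞, |r_{θj} − 1| ≤ t and |r_{θj}^{-1} − 1| ≤ t for all θ, j with 0 ≤ t < 1, and ℓ_min := inf_{θ∈Θ} max_{j∈[p]} μ_{θj} ≥ −2w̄/(1−t). For θ ∈ Θ define Ψ_θ := { j ∈ [p] : μ_{θj} ≥ max_{j̃∈[p]} μ_{θj̃} − (2w̄/(1−t))·((1+t)/(1−t)) }. Then for every θ ∈ Θ_I: max_{j∈[p]} ( v_{θj} + μ_{θj}·r_{θj} ) = max_{j∈Ψ_θ} ( v_{θj} + μ_{θj}·r_{θj} ). -/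
import Mathlib


/-- For every identified parameter value `θ₀` (one with all standardized population
moments `μ θ₀ j ≤ 0`), the maximum of `v θ₀ j + μ θ₀ j * r θ₀ j` over all `j ∈ [p]` is
attained on the set `Ψ_{θ₀}` of nearly binding inequalities, i.e. it coincides with the
maximum over `Ψ_{θ₀} = {j : μ θ₀ j ≥ max_{j'} μ θ₀ j' - (2w̄/(1-t))((1+t)/(1-t))}`.
The hypothesis `ℓ_min ≥ -2w̄/(1-t)` is expressed by its equivalent pointwise form. -/
theorem max_attained_on_nearly_binding {ι : Type*} [Nonempty ι] (p : ℕ) [NeZero p]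
    (μ v r : ι → Fin p → ℝ) (hr : ∀ θ j, 0 < r θ j)
    (hI : ∃ θ, ∀ j, μ θ j ≤ 0)
    (w t : ℝ) (ht0 : 0 ≤ t) (ht1 : t < 1)
    (hv : ∀ θ j, |v θ j| ≤ w)
    (hr1 : ∀ θ j, |r θ j - 1| ≤ t)
    (hr2 : ∀ θ j, |(r θ j)⁻¹ - 1| ≤ t)
    (hlmin : ∀ θ : ι, -(2 * w / (1 - t)) ≤
      Finset.univ.sup' Finset.univ_nonempty fun j => μ θ j)
    (θ₀ : ι) (hθ₀ : ∀ j, μ θ₀ j ≤ 0) :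
    ∃ j : Fin p,
      ((Finset.univ.sup' Finset.univ_nonempty fun j' => μ θ₀ j') -
          (2 * w / (1 - t)) * ((1 + t) / (1 - t)) ≤ μ θ₀ j) ∧
      v θ₀ j + μ θ₀ j * r θ₀ j =
        Finset.univ.sup' Finset.univ_nonempty
          fun j' => v θ₀ j' + μ θ₀ j' * r θ₀ j' := by

  have h1t : (0:ℝ) < 1 - t := by linarith
  obtain ⟨js, -, hjs⟩ := Finset.exists_mem_eq_sup' (Finset.univ_nonempty)
    (fun j' : Fin p => v θ₀ j' + μ θ₀ j' * r θ₀ j')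
  obtain ⟨j1, -, hj1⟩ := Finset.exists_mem_eq_sup' (Finset.univ_nonempty)
    (fun j' : Fin p => μ θ₀ j')
  refine ⟨js, ?_, hjs.symm⟩
  rw [hj1]
  have hw0 : (0:ℝ) ≤ w := le_trans (abs_nonneg _) (hv θ₀ j1)
  have hμ1 := hθ₀ j1
  have hμs := hθ₀ js
  have hv1 := (abs_le.mp (hv θ₀ j1)).1
  have hvs := (abs_le.mp (hv θ₀ js)).2
  have hr1u := (abs_le.mp (hr1 θ₀ j1)).2
  have hrsl := (abs_le.mp (hr1 θ₀ js)).1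
  have hmax : v θ₀ j1 + μ θ₀ j1 * r θ₀ j1 ≤ v θ₀ js + μ θ₀ js * r θ₀ js := by
    rw [← hjs]
    exact Finset.le_sup' (fun j' : Fin p => v θ₀ j' + μ θ₀ j' * r θ₀ j') (Finset.mem_univ j1)
  have hlm : -(2 * w / (1 - t)) ≤ μ θ₀ j1 := by
    have h := hlmin θ₀; rw [hj1] at h; exact h
  have hlm' : -(2 * w) ≤ μ θ₀ j1 * (1 - t) := by
    have h := (div_le_iff₀ h1t).mp (show -(2*w)/(1-t) ≤ μ θ₀ j1 by rw [neg_div]; exact hlm)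
    linarith
  have step1 : μ θ₀ j1 * (1 + t) - 2 * w ≤ μ θ₀ js * (1 - t) := by
    nlinarith [mul_le_mul_of_nonpos_left hr1u hμ1, mul_le_mul_of_nonpos_left hrsl hμs]
  have hD : (2 * w / (1 - t)) * ((1 + t) / (1 - t)) * (1 - t)^2 = 2 * w * (1 + t) := by
    have h2 : (1 - t)^2 ≠ 0 := pow_ne_zero _ h1t.ne'
    have : (2 * w / (1 - t)) * ((1 + t) / (1 - t)) = 2 * w * (1 + t) / (1 - t)^2 := by
      rw [div_mul_div_comm, sq]
    rw [this, div_mul_cancel₀ _ h2]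
  nlinarith [mul_le_mul_of_nonneg_right step1 h1t.le, hD,
    mul_nonneg ht0 (by linarith : (0:ℝ) ≤ μ θ₀ j1 * (1 - t) + 2 * w),
    mul_pos h1t h1t]
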